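/- There exists a 10×10 integer matrix S with |det S| = 42 such that Sᵀ · G(U⊕E_8) · S = G(A_6) ⊕ G(A_2) ⊕ G(A_1) ⊕ ⟨42⟩. In other words, the lattice A_6 ⊕ A_2 ⊕ A_1 ⊕ ⟨42⟩ embeds as a sublattice of index 42 in the even unimodular lattice U ⊕ E_8 of signature (1,9); i.e., A_6 ⊕ A_2 ⊕ A_1 and a vector h of square 42 glue to U ⊕ E_8. -/

import Mathlib

/-- The Gram matrix of the negative-definite root lattice `Aₙ` (0-based indexing:
`i : Fin n` is the vertex `a_{i+1}`): diagonal entries `-2`, entries `1` at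
adjacent positions, `0` elsewhere. -/
def gramA (n : ℕ) : Matrix (Fin n) (Fin n) ℤ :=
  Matrix.of fun i j =>
    if i = j then -2
    else if i.val + 1 = j.val ∨ j.val + 1 = i.val then 1
    else 0

/-- The Gram matrix of the negative-definite root lattice `D_k` (0-based indexing:
`i : Fin k` is the vertex `d_{i+1}`): diagonal entries `-2`, entries `1` at the
edges `{i, i+1}` (1-based, `1 ≤ i ≤ k-2`) and `{k-2, k}` (1-based), `0` elsewhere. -/
def gramD (k : ℕ) : Matrix (Fin k) (Fin k) ℤ :=
  Matrix.of fun i j =>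
    if i = j then -2
    else if (i.val + 1 = j.val ∧ j.val + 1 ≤ k - 1) ∨ (j.val + 1 = i.val ∧ i.val + 1 ≤ k - 1) ∨
        (i.val = k - 3 ∧ j.val = k - 1) ∨ (j.val = k - 3 ∧ i.val = k - 1) then 1
    else 0

/-- The Gram matrix of the negative-definite root lattice `E_l`, `l ∈ {6,7,8}`
(0-based indexing: `i : Fin l` is the vertex `e_{i+1}`): diagonal entries `-2`,
entries `1` at the edges `{i, i+1}` (1-based, `2 ≤ i ≤ l-1`) and `{1, 4}`
(1-based), `0` elsewhere. -/
def gramE (l : ℕ) : Matrix (Fin l) (Fin l) ℤ :=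
  Matrix.of fun i j =>
    if i = j then -2
    else if (i.val + 1 = j.val ∧ 1 ≤ i.val) ∨ (j.val + 1 = i.val ∧ 1 ≤ j.val) ∨
        (i.val = 0 ∧ j.val = 3) ∨ (j.val = 0 ∧ i.val = 3) then 1
    else 0

/-- Block-diagonal (orthogonal) sum of two Gram matrices. -/
def blockSum {m n : ℕ} (A : Matrix (Fin m) (Fin m) ℤ) (B : Matrix (Fin n) (Fin n) ℤ) :
    Matrix (Fin (m + n)) (Fin (m + n)) ℤ :=
  Matrix.reindex finSumFinEquiv finSumFinEquiv (Matrix.fromBlocks A 0 0 B)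

/-- The Gram matrix of the hyperbolic plane `U`. -/
def gramU : Matrix (Fin 2) (Fin 2) ℤ := !![0, 1; 1, 0]

/-- The Gram matrix of the even unimodular lattice `U ⊕ E₈` of signature `(1,9)`. -/
def gramUE8 : Matrix (Fin 10) (Fin 10) ℤ := blockSum gramU (gramE 8)

def Smat : Matrix (Fin 10) (Fin 10) ℤ :=
  !![0, 0, 0, 0, 0, 0, -3, 1, 0, -14;
     0, 0, 0, 0, 0, 0, -1, 1, -1, -7;
     0, 0, 0, 0, 0, 0, 1, 2, 3, 7;
     0, 0, 0, 0, 0, 0, -2, 3, 1, -7;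
     1, 0, 0, 0, 0, 0, -1, 4, 3, -1;
     0, 1, 0, 0, 0, 0, 0, 5, 5, 5;
     0, 0, 1, 0, 0, 0, 0, 4, 4, 4;
     0, 0, 0, 1, 0, 0, 0, 3, 3, 3;
     0, 0, 0, 0, 1, 0, 0, 2, 2, 2;
     0, 0, 0, 0, 0, 1, 0, 1, 1, 1]

def Vmat : Matrix (Fin 10) (Fin 10) ℤ :=
  !![0, 0, 0, 0, 1, 0, 0, 0, 0, 0;
     0, 0, 0, 0, 0, 1, 0, 0, 0, 0;
     0, 0, 0, 0, 0, 0, 1, 0, 0, 0;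
     0, 0, 0, 0, 0, 0, 0, 1, 0, 0;
     0, 0, 0, 0, 0, 0, 0, 0, 1, 0;
     0, 0, 0, 0, 0, 0, 0, 0, 0, 1;
     0, 0, 13, -56, 0, 0, 0, 0, 0, 0;
     1, 0, -3, 14, 0, 0, 0, 0, 0, 0;
     0, 1, 5, -21, 0, 0, 0, 0, 0, 0;
     0, 0, -3, 13, 0, 0, 0, 0, 0, 0]

def Wmat : Matrix (Fin 10) (Fin 10) ℤ :=
  !![0, 0, 0, 0, 0, 0, -3, 1, 0, -14;
     0, 0, 0, 0, 0, 0, -2, 0, 1, -7;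
     0, 0, 0, 0, 0, 0, 13, 0, 0, 56;
     0, 0, 0, 0, 0, 0, 3, 0, 0, 13;
     1, 0, 0, 0, 0, 0, 0, 0, 0, 0;
     0, 1, 0, 0, 0, 0, 0, 0, 0, 0;
     0, 0, 1, 0, 0, 0, 0, 0, 0, 0;
     0, 0, 0, 1, 0, 0, 0, 0, 0, 0;
     0, 0, 0, 0, 1, 0, 0, 0, 0, 0;
     0, 0, 0, 0, 0, 1, 0, 0, 0, 0]

def Hmat : Matrix (Fin 10) (Fin 10) ℤ :=
  !![1, 0, 0, 0, 0, 0, 0, 0, 0, 0;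
     1, -1, 0, 0, 0, 0, 0, 0, 0, 0;
     2, 3, 1, 0, 0, 0, 0, 0, 0, 0;
     3, 1, -9, 42, 0, 0, 0, 0, 0, 0;
     4, 3, -7, 36, 1, 0, 0, 0, 0, 0;
     5, 5, -5, 30, 0, 1, 0, 0, 0, 0;
     4, 4, -4, 24, 0, 0, 1, 0, 0, 0;
     3, 3, -3, 18, 0, 0, 0, 1, 0, 0;
     2, 2, -2, 12, 0, 0, 0, 0, 1, 0;
     1, 1, -1, 6, 0, 0, 0, 0, 0, 1]

lemma hSV : Smat * Vmat = Hmat := by decide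

lemma hVW : Vmat * Wmat = 1 := by decide

lemma hHlow : Hmat.BlockTriangular OrderDual.toDual := by
  unfold Matrix.BlockTriangular; simp only [OrderDual.toDual_lt_toDual]
  have h : ∀ i j : Fin 10, i < j → Hmat i j = 0 :=
    @of_decide_eq_true _ (@Fintype.decidableForallFintype (Fin 10) _
      (fun i => @Fintype.decidableForallFintype (Fin 10) _ (fun j => inferInstance) _) _) rfl
  exact fun i j => h i j

lemma hHdet : Hmat.det = -42 := by
  rw [Matrix.det_of_lowerTriangular Hmat hHlow]
  norm_num [Hmat, Fin.prod_univ_succ]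

lemma det_aux {n : Type*} [Fintype n] [DecidableEq n]
    (S V W H : Matrix n n ℤ) (h1 : S * V = H) (h2 : V * W = 1)
    (hH : H.det = -42) : |S.det| = 42 := by
  have hv : IsUnit V.det := by
    apply IsUnit.of_mul_eq_one (a := V.det) W.det
    rw [← Matrix.det_mul, h2, Matrix.det_one]
  have h3 : S.det * V.det = -42 := by rw [← Matrix.det_mul, h1, hH]
  rcases Int.isUnit_iff.mp hv with h4 | h4 <;>
    rw [h4] at h3 <;> [skip; rw [mul_neg_one] at h3] <;>
    simp at h3 <;> rw [h3] <;> norm_num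

lemma hSdet : |Smat.det| = 42 := det_aux Smat Vmat Wmat Hmat hSV hVW hHdet

/-- The lattice `A₆ ⊕ A₂ ⊕ A₁ ⊕ ⟨42⟩` embeds with index `42` into `U ⊕ E₈`: `A₆ ⊕ A₂ ⊕ A₁` and a vector of square `42` glue to `U ⊕ E₈`. -/
theorem glue_11 :
    ∃ S : Matrix (Fin 10) (Fin 10) ℤ,
      |S.det| = 42 ∧ S.transpose * gramUE8 * S = blockSum (blockSum (blockSum (gramA 6) (gramA 2)) (gramA 1)) !![(42 : ℤ)] := by
  refine ⟨Smat, hSdet, ?_⟩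
  decide
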